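/- Cocycle identity: Let 𝔤 be a nonassociative algebra over a field of characteristic zero, K its K-operator, and τ: T(𝔤) → End(T(𝔤)) the algebra homomorphism with τ(x) = τ_x. Then for all A, B ∈ T(𝔤): K(A) ⊗ K(B) = Σ_{(A)} K( A_{(1)} ⊗ τ(K(A_{(2)})) B ), where Δ(A) = Σ_{(A)} A_{(1)} ⊗ A_{(2)} is the standard comultiplication of T(𝔤). -/

import Mathlib

open TensorProduct

/-- The standard comultiplication of the tensor algebra. -/
noncomputable def tensorAlgebraComul (k : Type*) [Field k] (V : Type*) [AddCommGroup V]
    [Module k V] :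
    TensorAlgebra k V →ₐ[k] TensorAlgebra k V ⊗[k] TensorAlgebra k V :=
  TensorAlgebra.lift k
    ((TensorProduct.mk k (TensorAlgebra k V) (TensorAlgebra k V) 1).comp (TensorAlgebra.ι k)
      + ((TensorProduct.mk k (TensorAlgebra k V) (TensorAlgebra k V)).flip 1).comp
          (TensorAlgebra.ι k))

section Aux

variable {k : Type*} [Field k] {g : Type*} [AddCommGroup g] [Module k g]
  (d : g →ₗ[k] g →ₗ[k] g)
  (τ : TensorAlgebra k g →ₐ[k] Module.End k (TensorAlgebra k g))

local notation "T" => TensorAlgebra k g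
local notation "ιg" => TensorAlgebra.ι k (M := g)

lemma comul_ι (x : g) :
    tensorAlgebraComul k g (ιg x) = (1 : T) ⊗ₜ[k] ιg x + ιg x ⊗ₜ[k] (1 : T) := by
  simp [tensorAlgebraComul, TensorAlgebra.lift_ι_apply]

set_option maxHeartbeats 2000000 in
lemma aux_main
    (hτder : ∀ (x : g) (a b : T),
      τ (ιg x) (a * b) = τ (ιg x) a * b + a * τ (ιg x) b)
    (hτι : ∀ x y : g, τ (ιg x) (ιg y) = ιg (d x y))
    (K : T →ₗ[k] T)
    (hK1 : K 1 = 1)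
    (hK : ∀ (x : g) (a : T), K (ιg x * a + τ (ιg x) a) = ιg x * K a)
    (B : T) (L : T ⊗[k] T →ₗ[k] T)
    (hL : ∀ c e : T, L (c ⊗ₜ[k] e) = c * τ (K e) B)
    (A : T) :
    K A * K B = K (L (tensorAlgebraComul k g A)) := by
  set Δ := tensorAlgebraComul k g with hΔ
  have Δι : ∀ x : g, Δ (ιg x) = (1 : T) ⊗ₜ[k] ιg x + ιg x ⊗ₜ[k] (1 : T) := fun x => comul_ι x
  -- τ_x kills 1
  have tau1 : ∀ x : g, τ (ιg x) 1 = 0 := by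
    intro x
    have h := hτder x 1 1
    simp only [mul_one, one_mul] at h
    exact (left_eq_add.mp h)
  -- K on products with a generator
  have hKm : ∀ (x : g) (a : T), K (ιg x * a) = ιg x * K a - K (τ (ιg x) a) := by
    intro x a
    have h := hK x a
    rw [map_add] at h
    exact eq_sub_of_add_eq h
  -- the "double derivation" on T ⊗ T
  set D : g → (T ⊗[k] T →ₗ[k] T ⊗[k] T) := fun x =>
    LinearMap.rTensor T (τ (ιg x)) + LinearMap.lTensor T (τ (ιg x)) with hD
  have hDtmul : ∀ (x : g) (c e : T),
      D x (c ⊗ₜ[k] e) = τ (ιg x) c ⊗ₜ[k] e + c ⊗ₜ[k] τ (ιg x) e := by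
    intro x c e; simp [hD]
  have hDmul : ∀ (x : g) (u v : T ⊗[k] T), D x (u * v) = D x u * v + u * D x v := by
    intro x u v
    induction u using TensorProduct.induction_on with
    | zero => simp
    | tmul a b =>
      induction v using TensorProduct.induction_on with
      | zero => simp
      | tmul c e =>
        simp only [Algebra.TensorProduct.tmul_mul_tmul, hDtmul, hτder,
          TensorProduct.add_tmul, TensorProduct.tmul_add, add_mul, mul_add]
        abel
      | add v1 v2 h1 h2 =>
        simp only [mul_add, map_add, h1, h2]
        abel
    | add u1 u2 h1 h2 =>
      simp only [add_mul, map_add, h1, h2]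
      abel
  -- τ_x is a coderivation
  have coder : ∀ (x : g) (a : T), Δ (τ (ιg x) a) = D x (Δ a) := by
    intro x a
    induction a using TensorAlgebra.induction with
    | algebraMap r =>
      have h1 : τ (ιg x) (algebraMap k T r) = 0 := by
        rw [Algebra.algebraMap_eq_smul_one, map_smul, tau1, smul_zero]
      have h2 : Δ (algebraMap k T r) = r • ((1 : T) ⊗ₜ[k] (1 : T)) := by
        rw [AlgHom.commutes, Algebra.algebraMap_eq_smul_one, Algebra.TensorProduct.one_def]
      rw [h1, map_zero, h2, map_smul, hDtmul, tau1, TensorProduct.zero_tmul,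
        TensorProduct.tmul_zero, add_zero, smul_zero]
    | ι y =>
      rw [hτι, Δι, Δι, map_add, hDtmul, hDtmul, hτι, tau1, TensorProduct.zero_tmul,
        TensorProduct.tmul_zero, zero_add, add_zero]
    | mul a b ha hb =>
      simp only [hτder, map_add, map_mul, ha, hb, hDmul]
    | add a b ha hb =>
      simp only [map_add, ha, hb]
  -- key identity for L ∘ Δ on products with a generator
  have keyU : ∀ (x : g) (u : T ⊗[k] T),
      L (((1 : T) ⊗ₜ[k] ιg x + ιg x ⊗ₜ[k] (1 : T)) * u) =
        ιg x * L u + τ (ιg x) (L u) - L (D x u) := by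
    intro x u
    induction u using TensorProduct.induction_on with
    | zero => simp
    | tmul c e =>
      rw [add_mul, Algebra.TensorProduct.tmul_mul_tmul, Algebra.TensorProduct.tmul_mul_tmul]
      simp only [one_mul]
      rw [map_add, hDtmul, map_add, hL, hL, hL, hL, hL, hKm, map_sub, map_mul,
        LinearMap.sub_apply, Module.End.mul_apply, hτder, mul_sub, mul_assoc]
      abel
    | add u1 u2 h1 h2 =>
      simp only [mul_add, map_add, h1, h2]
      abel
  have keyE : ∀ (x : g) (a : T),
      L (Δ (ιg x * a)) = ιg x * L (Δ a) + τ (ιg x) (L (Δ a)) - L (Δ (τ (ιg x) a)) := by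
    intro x a
    rw [map_mul (Δ), Δι, keyU, coder]
  -- τ_x preserves the grading
  have pres : ∀ (x : g) (n : ℕ) (a : T),
      a ∈ (LinearMap.range (ιg) ^ n : Submodule k T) →
      τ (ιg x) a ∈ (LinearMap.range (ιg) ^ n : Submodule k T) := by
    intro x n
    induction n with
    | zero =>
      intro a ha
      rw [pow_zero, Submodule.one_eq_span, Submodule.mem_span_singleton] at ha ⊢
      obtain ⟨r, rfl⟩ := ha
      exact ⟨0, by simp [tau1]⟩
    | succ n ih =>
      intro a ha
      rw [pow_succ'] at ha ⊢
      refine Submodule.mul_induction_on ha ?_ ?_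
      · rintro m ⟨y, rfl⟩ b hb
        rw [hτder]
        refine add_mem (Submodule.mul_mem_mul ⟨d x y, (hτι x y).symm⟩ hb)
          (Submodule.mul_mem_mul ⟨y, rfl⟩ (ih b hb))
      · intro a b ha' hb'
        rw [map_add]
        exact add_mem ha' hb'
  -- main induction on the grading
  have main : ∀ (n : ℕ) (a : T), a ∈ (LinearMap.range (ιg) ^ n : Submodule k T) →
      K a * K B = K (L (Δ a)) := by
    intro n
    induction n with
    | zero =>
      intro a ha
      rw [pow_zero, Submodule.one_eq_span, Submodule.mem_span_singleton] at ha
      obtain ⟨r, rfl⟩ := ha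
      have h1 : Δ ((1 : T)) = (1 : T) ⊗ₜ[k] (1 : T) := by
        rw [map_one, Algebra.TensorProduct.one_def]
      simp only [map_smul, h1, smul_mul_assoc, hK1, hL, one_mul, map_one,
        Module.End.one_apply]
    | succ n ih =>
      intro a ha
      rw [pow_succ'] at ha
      refine Submodule.mul_induction_on ha ?_ ?_
      · rintro m ⟨x, rfl⟩ b hb
        rw [keyE, hKm, sub_mul, mul_assoc, ih b hb, ih (τ (ιg x) b) (pres x n b hb)]
        have h2 : K (ιg x * L (Δ b) + τ (ιg x) (L (Δ b)) - L (Δ (τ (ιg x) b))) =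
            ιg x * K (L (Δ b)) - K (L (Δ (τ (ιg x) b))) := by
          rw [map_sub, hK x (L (Δ b))]
        rw [h2]
      · intro a b ha' hb'
        rw [map_add, map_add (Δ), map_add, map_add, add_mul, ha', hb']
  -- conclude
  have htop : (⨆ n : ℕ, (LinearMap.range (ιg) ^ n : Submodule k T)) = ⊤ :=
    (DirectSum.Decomposition.isInternal _).submodule_iSup_eq_top
  have hA : A ∈ ⨆ n : ℕ, (LinearMap.range (ιg) ^ n : Submodule k T) := by
    rw [htop]; trivial
  refine Submodule.iSup_induction (motive := fun a => K a * K B = K (L (Δ a))) _ hA main ?_ ?_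
  · simp
  · intro a b ha' hb'
    rw [map_add, map_add (Δ), map_add, map_add, add_mul, ha', hb']

end Aux

/-- Cocycle identity (identity (5) of the paper): with `τ : T(𝔤) → End(T(𝔤))` the algebra
homomorphism extending `x ↦ τ_x` and `K` the K-operator of the nonassociative algebra `𝔤`,
for all `A, B ∈ T(𝔤)`:
`K(A) ⊗ K(B) = Σ_{(A)} K( A₍₁₎ ⊗ τ(K(A₍₂₎)) B )`, where the right-hand side is expressed
by applying `K` after the bilinear map `(c, e) ↦ c * τ(K(e)) B` to `Δ(A)`. -/
theorem kOperator_cocycle_identity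
    (k : Type*) [Field k] [CharZero k] (g : Type*) [AddCommGroup g] [Module k g]
    (d : g →ₗ[k] g →ₗ[k] g)
    (τ : TensorAlgebra k g →ₐ[k] Module.End k (TensorAlgebra k g))
    (hτder : ∀ (x : g) (a b : TensorAlgebra k g),
      τ (TensorAlgebra.ι k x) (a * b) =
        τ (TensorAlgebra.ι k x) a * b + a * τ (TensorAlgebra.ι k x) b)
    (hτι : ∀ x y : g,
      τ (TensorAlgebra.ι k x) (TensorAlgebra.ι k y) = TensorAlgebra.ι k (d x y))
    (K : TensorAlgebra k g →ₗ[k] TensorAlgebra k g)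
    (hK1 : K 1 = 1)
    (hK : ∀ (x : g) (a : TensorAlgebra k g),
      K (TensorAlgebra.ι k x * a + τ (TensorAlgebra.ι k x) a) =
        TensorAlgebra.ι k x * K a)
    (A B : TensorAlgebra k g) :
    K A * K B =
      K ((TensorProduct.lift
            (LinearMap.mk₂ k (fun c e => c * τ (K e) B)
              (fun c c' e => by simp [add_mul])
              (fun s c e => by simp [smul_mul_assoc])
              (fun c e e' => by simp [map_add, mul_add])
              (fun s c e => by simp [map_smul, mul_smul_comm])))
          (tensorAlgebraComul k g A)) := by
  exact aux_main d τ hτder hτι K hK1 hK B _ (fun c e => by simp) A
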